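/- There exists a distance preservation game that admits no jump stable location profile. Concretely, the DPG with two agents N = {1,2}, relationship sets M_1 = {2} and M_2 = {1}, and ideal distances d_1(2) = 1 and d_2(1) = 0 has no jump stable location profile. -/

import Mathlib

open Finset

/-- A distance preservation game (DPG): a finite set of agents `N`, for each agent `i` a
relationship set `M i ⊆ N \ {i}`, and an ideal distance `d i j ∈ [0,1]` for each `j ∈ M i`. -/
structure DPG (N : Type) [Fintype N] [DecidableEq N] where
  M : N → Finset N
  notMem_self : ∀ i, i ∉ M i
  d : N → N → ℝ
  d_nonneg : ∀ i j, j ∈ M i → 0 ≤ d i j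
  d_le_one : ∀ i j, j ∈ M i → d i j ≤ 1

variable {N : Type} [Fintype N] [DecidableEq N]

/-- The utility of agent `i` from agent `j` under location profile `A`. -/
def DPG.utilPair (I : DPG N) (A : N → ℝ) (i j : N) : ℝ :=
  1 - |(|A i - A j|) - I.d i j|

/-- The utility of agent `i` under location profile `A`. -/
def DPG.util (I : DPG N) (A : N → ℝ) (i : N) : ℝ :=
  ∑ j ∈ I.M i, I.utilPair A i j

/-- The social welfare of a location profile. -/
def DPG.SW (I : DPG N) (A : N → ℝ) : ℝ := ∑ i, I.util A i

/-- A valid location profile: every agent is located in the unit interval. -/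
def IsProfile (A : N → ℝ) : Prop := ∀ i, A i ∈ Set.Icc (0:ℝ) 1

/-- A location profile is jump stable if no agent can increase their utility by jumping
to another location in the unit interval. -/
def DPG.JumpStable (I : DPG N) (A : N → ℝ) : Prop :=
  ∀ i : N, ∀ x ∈ Set.Icc (0:ℝ) 1, I.util (Function.update A i x) i ≤ I.util A i

/-- A DPG is symmetric if `j ∈ M i` implies `i ∈ M j` and `d i j = d j i`. -/
def DPG.Symmetric (I : DPG N) : Prop :=
  ∀ i j, j ∈ I.M i → i ∈ I.M j ∧ I.d i j = I.d j i

/-- There exists a DPG (with two agents, `M 0 = {1}`, `M 1 = {0}`, `d 0 1 = 1`, `d 1 0 = 0`)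
that admits no jump stable location profile. -/
theorem stmt0 :
    ∃ I : DPG (Fin 2),
      I.M 0 = {1} ∧ I.M 1 = {0} ∧ I.d 0 1 = 1 ∧ I.d 1 0 = 0 ∧
      ∀ A : Fin 2 → ℝ, IsProfile A → ¬ I.JumpStable A := by
  refine ⟨⟨fun i => if i = 0 then {1} else {0}, by decide,
    fun i j => if i = 0 then 1 else 0, fun i j _ => by split <;> norm_num,
    fun i j _ => by split <;> norm_num⟩, rfl, rfl, by norm_num, by norm_num, ?_⟩
  intro A hA hJS
  have h0 := hA 0
  have h1 := hA 1
  simp only [Set.mem_Icc] at h0 h1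
  have t1 := hJS 1 (A 0) ⟨h0.1, h0.2⟩
  have t2 := hJS 0 1 (by norm_num)
  have t3 := hJS 0 0 (by norm_num)
  simp only [DPG.util, DPG.utilPair] at t1 t2 t3
  norm_num [Function.update] at t1 t2 t3
  have e : A 0 = A 1 := by linarith
  rw [e, sub_self, abs_zero] at t2 t3
  norm_num at t2 t3
  rw [abs_of_nonneg (by linarith : (0:ℝ) ≤ 1 - A 1)] at t2
  rw [abs_of_nonneg h1.1] at t3
  rw [abs_of_nonpos (by linarith : 1 - A 1 - 1 ≤ 0)] at t2
  rw [abs_of_nonpos (by linarith : A 1 - 1 ≤ 0)] at t3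
  linarith
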